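/- (Consensus bound on the accelerated iterates) Consider the distributed proximal-gradient iterates x_i^(k), y_i^(k), q_i^(k), q̂_i^(k) for agents i = 1,…,m as defined in the context, with averages ȳ^(k) = (1/m)Σ_{i=1}^m y_i^(k). Then for every k ≥ 2 and every agent i: ‖y_i^(k) − ȳ^(k)‖ ≤ 4·Γ·γ^k·Σ_{j=1}^m ‖q_j^(k)‖ + 2·Γ·γ^{k−1}·Σ_{j=1}^m ‖q_j^(k−1)‖. -/

import Mathlib

open RealInnerProductSpace

section Aux
variable {E : Type*} [NormedAddCommGroup E] [InnerProductSpace ℝ E]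

lemma combo_norm_sq (u v : E) (t : ℝ) :
    ‖(1-t)•u + t•v‖^2 = (1-t)*‖u‖^2 + t*‖v‖^2 - t*(1-t)*‖v-u‖^2 := by
  have h1 := real_inner_self_eq_norm_sq ((1-t)•u + t•v)
  have h2 := real_inner_self_eq_norm_sq (v - u)
  have h3 := real_inner_self_eq_norm_sq u
  have h4 := real_inner_self_eq_norm_sq v
  rw [← h1, ← h2, ← h3, ← h4]
  simp only [inner_add_left, inner_add_right, inner_sub_left, inner_sub_right,
    real_inner_smul_left, real_inner_smul_right, real_inner_comm u v]
  ring

lemma strong_min (h : E → ℝ) (hh : ConvexOn ℝ Set.univ h) {c : ℝ} (hc : 0 < c)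
    (a p : E) (hmin : ∀ z, h a + c*‖a-p‖^2 ≤ h z + c*‖z-p‖^2) (b : E) :
    c*‖b-a‖^2 ≤ (h b + c*‖b-p‖^2) - (h a + c*‖a-p‖^2) := by
  have key : ∀ t : ℝ, 0 < t → t < 1 →
      c*(1-t)*‖b-a‖^2 ≤ (h b + c*‖b-p‖^2) - (h a + c*‖a-p‖^2) := by
    intro t ht0 ht1
    have hz := hmin ((1-t)•a + t•b)
    have hconv := hh.2 (Set.mem_univ a) (Set.mem_univ b)
      (by linarith : (0:ℝ) ≤ 1 - t) (le_of_lt ht0) (by ring)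
    have hid : ‖((1-t)•a + t•b) - p‖^2
        = (1-t)*‖a-p‖^2 + t*‖b-p‖^2 - t*(1-t)*‖b-a‖^2 := by
      have hcn := combo_norm_sq (a - p) (b - p) t
      have e1 : (1-t)•(a-p) + t•(b-p) = ((1-t)•a + t•b) - p := by module
      have e2 : (b - p) - (a - p) = b - a := by abel
      rw [e1, e2] at hcn
      exact hcn
    rw [hid] at hz
    simp only [smul_eq_mul] at hconv
    have step : t * (c*(1-t)*‖b-a‖^2)
        ≤ t * ((h b + c*‖b-p‖^2) - (h a + c*‖a-p‖^2)) := by nlinarith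
    exact (mul_le_mul_iff_right₀ ht0).mp step
  refine le_of_forall_pos_le_add ?_
  intro ε hε
  have hq0 : (0:ℝ) ≤ c*‖b-a‖^2 := by positivity
  set t : ℝ := min (1/2) (ε/(c*‖b-a‖^2+1)) with ht
  have ht0 : 0 < t := lt_min (by norm_num) (by positivity)
  have ht1 : t < 1 := lt_of_le_of_lt (min_le_left _ _) (by norm_num)
  have hk := key t ht0 ht1
  have htle : t * (c*‖b-a‖^2) ≤ ε := by
    have h1 : t ≤ ε/(c*‖b-a‖^2+1) := min_le_right _ _
    have h2 : t * (c*‖b-a‖^2) ≤ (ε/(c*‖b-a‖^2+1)) * (c*‖b-a‖^2) :=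
      mul_le_mul_of_nonneg_right h1 hq0
    refine h2.trans ?_
    rw [div_mul_eq_mul_div, div_le_iff₀ (by positivity)]
    nlinarith
  nlinarith

lemma prox_nonexp (h : E → ℝ) (hh : ConvexOn ℝ Set.univ h) {c : ℝ} (hc : 0 < c)
    (a b p p' : E)
    (ha : ∀ z, h a + c*‖a-p‖^2 ≤ h z + c*‖z-p‖^2)
    (hb : ∀ z, h b + c*‖b-p'‖^2 ≤ h z + c*‖z-p'‖^2) :
    ‖a - b‖ ≤ ‖p - p'‖ := by
  have h1 := strong_min h hh hc a p ha b
  have h2 := strong_min h hh hc b p' hb a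
  have hexp : ‖b-p‖^2-‖a-p‖^2+‖a-p'‖^2-‖b-p'‖^2 = 2*⟪b-a,p'-p⟫ := by
    have e1 := real_inner_self_eq_norm_sq (b-p)
    have e2 := real_inner_self_eq_norm_sq (a-p)
    have e3 := real_inner_self_eq_norm_sq (a-p')
    have e4 := real_inner_self_eq_norm_sq (b-p')
    rw [← e1, ← e2, ← e3, ← e4]
    simp only [inner_sub_left, inner_sub_right, real_inner_comm a p, real_inner_comm b p,
      real_inner_comm a p', real_inner_comm b p']
    ring
  have hCS : ⟪b-a, p'-p⟫ ≤ ‖b-a‖*‖p'-p‖ := real_inner_le_norm _ _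
  have hnn : ‖b-a‖ = ‖a-b‖ := norm_sub_rev _ _
  have hpp : ‖p'-p‖ = ‖p-p'‖ := norm_sub_rev _ _
  have hab : ‖b-a‖^2 = ‖a-b‖^2 := by rw [hnn]
  rcases eq_or_lt_of_le (norm_nonneg (a-b)) with h0 | h0
  · rw [← h0]; exact norm_nonneg _
  · rw [hnn, hpp] at hCS
    have hkey : ‖a-b‖*‖a-b‖ ≤ ‖a-b‖*‖p-p'‖ := by
      nlinarith [mul_le_mul_of_nonneg_left hCS hc.le, h1, h2, hexp, hab]
    exact le_of_mul_le_mul_left hkey h0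

end Aux

/-- Consensus bound on the accelerated iterates. -/
theorem y_consensus_bound {d m : ℕ} (hm : 1 ≤ m)
    (α L Gg Gh Γ γ : ℝ)
    (hα : 0 < α) (hL : 0 < L) (hGg : 0 < Gg) (hGh : 0 < Gh) (hΓ : 0 < Γ)
    (hγ0 : 0 < γ) (hγ1 : γ < 1)
    -- the differentiable local objectives and their gradients
    (g : Fin m → EuclideanSpace ℝ (Fin d) → ℝ)
    (g' : Fin m → EuclideanSpace ℝ (Fin d) → EuclideanSpace ℝ (Fin d))
    (hgconv : ∀ i, ConvexOn ℝ Set.univ (g i))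
    (hgrad : ∀ i z, HasGradientAt (g i) (g' i z) z)
    (hLip : ∀ i z w, ‖g' i z - g' i w‖ ≤ L * ‖z - w‖)
    (hGgrad : ∀ i z, ‖g' i z‖ ≤ Gg)
    -- the common nondifferentiable objective, with bounded subgradients
    (h : EuclideanSpace ℝ (Fin d) → ℝ)
    (hhconv : ConvexOn ℝ Set.univ h)
    (hsub : ∀ x z : EuclideanSpace ℝ (Fin d),
      (∀ u, h x + ⟪z, u - x⟫ ≤ h u) → ‖z‖ ≤ Gh)
    -- the consensus weight matrices
    (lam : ℕ → Fin m → Fin m → ℝ)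
    (hlam_nonneg : ∀ k, 1 ≤ k → ∀ i j, 0 ≤ lam k i j)
    (hlam_row : ∀ k, 1 ≤ k → ∀ i, ∑ j, lam k i j = 1)
    (hlam_col : ∀ k, 1 ≤ k → ∀ j, ∑ i, lam k i j = 1)
    (hlam_close : ∀ k, 1 ≤ k → ∀ i j, |lam k i j - 1 / m| ≤ Γ * γ ^ k)
    -- the iterates
    (x y q qhat : ℕ → Fin m → EuclideanSpace ℝ (Fin d))
    (hq : ∀ k, 1 ≤ k → ∀ i, q k i = y (k - 1) i - α • g' i (y (k - 1) i))
    (hqhat : ∀ k, 1 ≤ k → ∀ i, qhat k i = ∑ j, lam k i j • q k j)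
    (hx : ∀ k, 1 ≤ k → ∀ i, ∀ z : EuclideanSpace ℝ (Fin d),
      h (x k i) + (1 / (2 * α)) * ‖x k i - qhat k i‖ ^ 2 ≤
        h z + (1 / (2 * α)) * ‖z - qhat k i‖ ^ 2)
    (hy : ∀ k, 1 ≤ k → ∀ i,
      y k i = x k i + (((k : ℝ) - 1) / ((k : ℝ) + 2)) • (x k i - x (k - 1) i))
    :
    ∀ k, 2 ≤ k → ∀ i,
      ‖y k i - (1 / (m : ℝ)) • ∑ j, y k j‖ ≤
        4 * Γ * γ ^ k * ∑ j, ‖q k j‖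
          + 2 * Γ * γ ^ (k - 1) * ∑ j, ‖q (k - 1) j‖ := by
  have hmpos : (0:ℝ) < (m:ℝ) := by exact_mod_cast hm
  have hm0 : (m:ℝ) ≠ 0 := ne_of_gt hmpos
  have hc : (0:ℝ) < 1/(2*α) := by positivity
  -- prox nonexpansiveness
  have hxdiff : ∀ n, 1 ≤ n → ∀ i j, ‖x n i - x n j‖ ≤ ‖qhat n i - qhat n j‖ := by
    intro n hn i j
    exact prox_nonexp h hhconv hc _ _ _ _ (hx n hn i) (hx n hn j)
  -- qhat spread bound
  have hqd : ∀ n, 1 ≤ n → ∀ i j, ‖qhat n i - qhat n j‖ ≤ 2*Γ*γ^n * ∑ l, ‖q n l‖ := by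
    intro n hn i j
    have e : qhat n i - qhat n j = ∑ l, (lam n i l - lam n j l) • q n l := by
      rw [hqhat n hn i, hqhat n hn j, ← Finset.sum_sub_distrib]
      simp [sub_smul]
    rw [e]
    calc ‖∑ l, (lam n i l - lam n j l) • q n l‖
        ≤ ∑ l, ‖(lam n i l - lam n j l) • q n l‖ := norm_sum_le _ _
      _ ≤ ∑ l, (2*Γ*γ^n) * ‖q n l‖ := by
          apply Finset.sum_le_sum; intro l _
          rw [norm_smul, Real.norm_eq_abs]
          apply mul_le_mul_of_nonneg_right _ (norm_nonneg _)
          calc |lam n i l - lam n j l|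
              ≤ |lam n i l - 1/m| + |1/m - lam n j l| := abs_sub_le _ _ _
            _ = |lam n i l - 1/m| + |lam n j l - 1/m| := by rw [abs_sub_comm (1/(m:ℝ))]
            _ ≤ Γ*γ^n + Γ*γ^n := add_le_add (hlam_close n hn i l) (hlam_close n hn j l)
            _ = 2*Γ*γ^n := by ring
      _ = (2*Γ*γ^n) * ∑ l, ‖q n l‖ := (Finset.mul_sum _ _ _).symm
  -- consensus of x
  have hxbar : ∀ n, 1 ≤ n → ∀ i,
      ‖x n i - (1/(m:ℝ)) • ∑ j, x n j‖ ≤ 2*Γ*γ^n * ∑ l, ‖q n l‖ := by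
    intro n hn i
    have e : x n i - (1/(m:ℝ)) • ∑ j, x n j = (1/(m:ℝ)) • ∑ j, (x n i - x n j) := by
      rw [Finset.sum_sub_distrib, Finset.sum_const, Finset.card_univ, Fintype.card_fin,
        smul_sub]
      congr 1
      rw [← Nat.cast_smul_eq_nsmul ℝ, smul_smul, one_div, inv_mul_cancel₀ hm0, one_smul]
    rw [e]
    have hS : (0:ℝ) ≤ ∑ l, ‖q n l‖ := Finset.sum_nonneg fun l _ => norm_nonneg _
    calc ‖(1/(m:ℝ)) • ∑ j, (x n i - x n j)‖
        = (1/(m:ℝ)) * ‖∑ j, (x n i - x n j)‖ := by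
          rw [norm_smul, Real.norm_eq_abs, abs_of_pos (by positivity)]
      _ ≤ (1/(m:ℝ)) * ∑ j, ‖x n i - x n j‖ := by
          exact mul_le_mul_of_nonneg_left (norm_sum_le _ _) (by positivity)
      _ ≤ (1/(m:ℝ)) * ∑ _j : Fin m, (2*Γ*γ^n * ∑ l, ‖q n l‖) := by
          apply mul_le_mul_of_nonneg_left _ (by positivity : (0:ℝ) ≤ 1/(m:ℝ))
          exact Finset.sum_le_sum fun j _ => (hxdiff n hn i j).trans (hqd n hn i j)
      _ = (1/(m:ℝ)) * ((m:ℝ) * (2*Γ*γ^n * ∑ l, ‖q n l‖)) := by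
          rw [Finset.sum_const, Finset.card_univ, Fintype.card_fin, nsmul_eq_mul]
      _ = 2*Γ*γ^n * ∑ l, ‖q n l‖ := by field_simp
  intro k hk i
  have hk1 : 1 ≤ k := le_trans one_le_two hk
  have hk1' : 1 ≤ k - 1 := Nat.le_sub_one_of_lt hk
  set β : ℝ := ((k:ℝ)-1)/((k:ℝ)+2) with hβ
  have hkR : (2:ℝ) ≤ (k:ℝ) := by exact_mod_cast hk
  have hβ0 : 0 ≤ β := div_nonneg (by linarith) (by linarith)
  have hβ1 : β ≤ 1 := by
    rw [div_le_one (by linarith)]; linarith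
  have hsumy : ∑ j, y k j = ∑ j, x k j + β • (∑ j, x k j - ∑ j, x (k-1) j) := by
    calc ∑ j, y k j = ∑ j, (x k j + β • (x k j - x (k-1) j)) :=
          Finset.sum_congr rfl fun j _ => hy k hk1 j
      _ = ∑ j, x k j + β • (∑ j, x k j - ∑ j, x (k-1) j) := by
          rw [Finset.sum_add_distrib, ← Finset.smul_sum, Finset.sum_sub_distrib]
  have hdecomp : y k i - (1/(m:ℝ)) • ∑ j, y k j
      = (x k i - (1/(m:ℝ)) • ∑ j, x k j)
        + β • ((x k i - (1/(m:ℝ)) • ∑ j, x k j)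
              - (x (k-1) i - (1/(m:ℝ)) • ∑ j, x (k-1) j)) := by
    rw [hy k hk1 i, hsumy]
    module
  have h1 := hxbar k hk1 i
  have h2 := hxbar (k-1) hk1' i
  have hS1 : (0:ℝ) ≤ ∑ l, ‖q k l‖ := Finset.sum_nonneg fun l _ => norm_nonneg _
  have hS2 : (0:ℝ) ≤ ∑ l, ‖q (k-1) l‖ := Finset.sum_nonneg fun l _ => norm_nonneg _
  have hA : (0:ℝ) ≤ 2*Γ*γ^k * ∑ l, ‖q k l‖ := by positivity
  rw [hdecomp]
  calc ‖(x k i - (1/(m:ℝ)) • ∑ j, x k j)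
        + β • ((x k i - (1/(m:ℝ)) • ∑ j, x k j)
              - (x (k-1) i - (1/(m:ℝ)) • ∑ j, x (k-1) j))‖
      ≤ ‖x k i - (1/(m:ℝ)) • ∑ j, x k j‖
        + β * (‖x k i - (1/(m:ℝ)) • ∑ j, x k j‖
              + ‖x (k-1) i - (1/(m:ℝ)) • ∑ j, x (k-1) j‖) := by
        refine (norm_add_le _ _).trans ?_
        gcongr
        rw [norm_smul, Real.norm_eq_abs, abs_of_nonneg hβ0]
        exact mul_le_mul_of_nonneg_left (norm_sub_le _ _) hβ0
    _ ≤ 4 * Γ * γ ^ k * ∑ j, ‖q k j‖ + 2 * Γ * γ ^ (k - 1) * ∑ j, ‖q (k - 1) j‖ := by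
        have e1 : β * ‖x k i - (1/(m:ℝ)) • ∑ j, x k j‖ ≤ 1 * (2*Γ*γ^k * ∑ l, ‖q k l‖) :=
          mul_le_mul hβ1 h1 (norm_nonneg _) zero_le_one
        have e2 : β * ‖x (k-1) i - (1/(m:ℝ)) • ∑ j, x (k-1) j‖
            ≤ 1 * (2*Γ*γ^(k-1) * ∑ l, ‖q (k-1) l‖) :=
          mul_le_mul hβ1 h2 (norm_nonneg _) zero_le_one
        nlinarith [norm_nonneg (x k i - (1/(m:ℝ)) • ∑ j, x k j),
          norm_nonneg (x (k-1) i - (1/(m:ℝ)) • ∑ j, x (k-1) j)]
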